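/- Let a > 0, v > 0, and let L be a real number with L ≥ v²/(2a). Then L/v + v/(2a) (equivalently (2aL + v²)/(2av)) is the least element of the set of crossing times {T : ℝ | T ≥ 0 and there exists a differentiable x : ℝ → ℝ with x(0) = 0, deriv x(0) = 0, deriv x Lipschitz continuous with constant a, deriv x(t) ≤ v for all t ≥ 0, and x(T) = L}. That is, T_m = (2aL + v²)/(2av) is the shortest time in which a vehicle starting from rest can cross an intersection route of length L. -/

import Mathlib

noncomputable def optPos (a v t : ℝ) : ℝ :=
  if t ≤ v / a then a * t ^ 2 / 2 else v * t - v ^ 2 / (2 * a)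

lemma optPos_hasDerivAt {a v : ℝ} (ha : 0 < a) (hv : 0 < v) (t : ℝ) :
    HasDerivAt (optPos a v) (min (a * t) v) t := by
  obtain ⟨c, hc⟩ : ∃ c : ℝ, c = v / a := ⟨_, rfl⟩
  have hcv : a * c = v := by rw [hc]; field_simp
  have hq : ∀ s : ℝ, HasDerivAt (fun u : ℝ => a * u ^ 2 / 2) (a * s) s := by
    intro s
    have := ((hasDerivAt_pow 2 s).const_mul a).div_const 2
    refine this.congr_deriv ?_
    push_cast; ring
  have hl : ∀ s : ℝ, HasDerivAt (fun u : ℝ => v * u - v ^ 2 / (2 * a)) v s := by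
    intro s
    have := ((hasDerivAt_id s).const_mul v).sub_const (v ^ 2 / (2 * a))
    simpa using this
  have hval : a * c ^ 2 / 2 = v * c - v ^ 2 / (2 * a) := by
    rw [hc]; field_simp; ring
  rcases lt_trichotomy t c with h | h | h
  · have hmin : min (a * t) v = a * t := by
      refine min_eq_left ?_
      have : a * t < a * c := by nlinarith
      linarith [hcv ▸ this]
    rw [hmin]
    refine (hq t).congr_of_eventuallyEq ?_
    filter_upwards [eventually_lt_nhds h] with u hu
    simp [optPos, ← hc, hu.le]
  · subst h
    have hmin : min (a * t) v = v := by rw [hcv]; simp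
    rw [hmin]
    have h1 : HasDerivWithinAt (optPos a v) v (Set.Iic t) t := by
      have h0 : HasDerivWithinAt (fun u : ℝ => a * u ^ 2 / 2) v (Set.Iic t) t := by
        have := (hq t).hasDerivWithinAt (s := Set.Iic t)
        rwa [hcv] at this
      refine h0.congr (fun u hu => ?_) ?_
      · simp [optPos, ← hc, Set.mem_Iic.mp hu]
      · simp [optPos, ← hc]
    have h2 : HasDerivWithinAt (optPos a v) v (Set.Ici t) t := by
      have h0 : HasDerivWithinAt (fun u : ℝ => v * u - v ^ 2 / (2 * a)) v (Set.Ici t) t :=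
        (hl t).hasDerivWithinAt
      refine h0.congr (fun u hu => ?_) ?_
      · rcases eq_or_lt_of_le (Set.mem_Ici.mp hu) with h' | h'
        · subst h'; simp [optPos, ← hc, hval]
        · simp [optPos, ← hc, not_le.mpr h']
      · simp [optPos, ← hc, hval]
    have := h1.union h2
    rwa [Set.Iic_union_Ici, hasDerivWithinAt_univ] at this
  · have hmin : min (a * t) v = v := by
      refine min_eq_right ?_
      have : a * c < a * t := by nlinarith
      linarith [hcv ▸ this]
    rw [hmin]
    refine (hl t).congr_of_eventuallyEq ?_
    filter_upwards [eventually_gt_nhds h] with u hu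
    simp [optPos, ← hc, not_le.mpr hu]

lemma optSpeed_lipschitz {a v : ℝ} (ha : 0 < a) :
    LipschitzWith ⟨a, ha.le⟩ (fun t : ℝ => min (a * t) v) := by
  refine LipschitzWith.of_dist_le_mul fun s t => ?_
  simp only [Real.dist_eq, NNReal.coe_mk]
  have key : |min (a * s) v - min (a * t) v| ≤ |a * s - a * t| := by
    rcases le_total (a * s) v with h1 | h1 <;> rcases le_total (a * t) v with h2 | h2 <;>
      simp only [min_eq_left, min_eq_right, h1, h2] <;>
      rw [abs_sub_le_iff] <;>
      constructor <;>
      linarith [le_abs_self (a * s - a * t), neg_abs_le (a * s - a * t)]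
  calc |min (a * s) v - min (a * t) v| ≤ |a * s - a * t| := key
    _ = a * |s - t| := by rw [← mul_sub, abs_mul, abs_of_pos ha]


/-- Case 2 of the shortest-crossing-time calculation: if the route length `L`
satisfies `L ≥ v² / (2a)` (long enough to reach the maximum allowed speed
`v`), then `L / v + v / (2a) = (2aL + v²) / (2av)` is the least time `T ≥ 0`
in which some admissible trajectory (starting from rest, speed Lipschitz with
constant `a` and bounded by `v` for `t ≥ 0`) covers distance `L`. -/
theorem shortest_crossing_time_long_route
    (a v L : ℝ) (ha : 0 < a) (hv : 0 < v) (hL : v ^ 2 / (2 * a) ≤ L) :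
    IsLeast
      {T : ℝ | 0 ≤ T ∧ ∃ x : ℝ → ℝ,
        Differentiable ℝ x ∧ x 0 = 0 ∧ deriv x 0 = 0 ∧
        LipschitzWith ⟨a, ha.le⟩ (deriv x) ∧
        (∀ t : ℝ, 0 ≤ t → deriv x t ≤ v) ∧
        x T = L}
      (L / v + v / (2 * a)) ∧
    L / v + v / (2 * a) = (2 * a * L + v ^ 2) / (2 * a * v) := by
  have h2a : (0 : ℝ) < 2 * a := by linarith
  have hkey : v ^ 2 ≤ 2 * a * L := by
    have := (div_le_iff₀ h2a).mp hL; linarith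
  have hLpos : 0 < L := lt_of_lt_of_le (by positivity) hL
  have hderiv := optPos_hasDerivAt ha hv (a := a) (v := v)
  have hderiv' : deriv (optPos a v) = fun t => min (a * t) v :=
    funext fun t => (hderiv t).deriv
  have hpos : ∀ t : ℝ, v / a ≤ t → optPos a v t = v * t - v ^ 2 / (2 * a) := by
    intro t ht
    unfold optPos
    by_cases h : t ≤ v / a
    · have : t = v / a := le_antisymm h ht
      subst this
      rw [if_pos le_rfl]
      field_simp; ring
    · rw [if_neg h]
  have hTc : v / a ≤ L / v + v / (2 * a) := by
    have heq : L / v + v / (2 * a) - v / a = (2 * a * L - v ^ 2) / (2 * a * v) := by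
      field_simp; ring
    have : 0 ≤ (2 * a * L - v ^ 2) / (2 * a * v) := by
      apply div_nonneg (by linarith) (by positivity)
    linarith [heq ▸ this]
  refine ⟨⟨⟨by positivity, optPos a v, fun t => (hderiv t).differentiableAt, ?_, ?_, ?_, ?_, ?_⟩, ?_⟩, by field_simp⟩
  · simp [optPos, le_div_iff₀ ha]
    intro h; nlinarith
  · rw [hderiv']; simp [hv.le]
  · rw [hderiv']; exact optSpeed_lipschitz ha
  · rw [hderiv']; intro t _; exact min_le_right _ _
  · rw [hpos _ hTc]; field_simp; ring
  · rintro T ⟨hT0, x, hdx, hx0, hdx0, hlip, hbd, hxT⟩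
    have hcont : Continuous (deriv x) := hlip.continuous
    have hcont2 : Continuous (fun t : ℝ => min (a * t) v) := by fun_prop
    have hptwise : ∀ t ∈ Set.Icc (0:ℝ) T, deriv x t ≤ min (a * t) v := by
      intro t ht
      refine le_min ?_ (hbd t ht.1)
      have := hlip.dist_le_mul t 0
      simp only [Real.dist_eq, NNReal.coe_mk, hdx0, sub_zero] at this
      calc deriv x t ≤ |deriv x t| := le_abs_self _
        _ ≤ a * |t| := this
        _ = a * t := by rw [abs_of_nonneg ht.1]
    have hftc1 : ∫ t in (0:ℝ)..T, deriv x t = L := by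
      rw [intervalIntegral.integral_deriv_eq_sub (fun t _ => hdx t)
        (hcont.intervalIntegrable 0 T), hxT, hx0, sub_zero]
    have hftc2 : ∫ t in (0:ℝ)..T, min (a * t) v = optPos a v T := by
      rw [intervalIntegral.integral_eq_sub_of_hasDerivAt (fun t _ => hderiv t)
        (hcont2.intervalIntegrable 0 T)]
      have : optPos a v 0 = 0 := by
        simp [optPos, le_div_iff₀ ha]
        intro h; nlinarith
      rw [this, sub_zero]
    have hmono : (∫ t in (0:ℝ)..T, deriv x t) ≤ ∫ t in (0:ℝ)..T, min (a * t) v :=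
      intervalIntegral.integral_mono_on hT0 (hcont.intervalIntegrable 0 T)
        (hcont2.intervalIntegrable 0 T) hptwise
    rw [hftc1, hftc2] at hmono
    by_cases hc : v / a ≤ T
    · rw [hpos T hc] at hmono
      have heq : L / v + v / (2 * a) = (2 * a * L + v ^ 2) / (2 * a * v) := by
        field_simp
      rw [heq, div_le_iff₀ (by positivity)]
      have h := mul_le_mul_of_nonneg_left hmono h2a.le
      have hcancel : 2 * a * (v ^ 2 / (2 * a)) = v ^ 2 := by field_simp
      rw [mul_sub, hcancel] at h
      nlinarith
    · push_neg at hc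
      exfalso
      have h1 : a * T < v := by
        have := (lt_div_iff₀ ha).mp hc; linarith
      rw [optPos, if_pos hc.le] at hmono
      nlinarith [mul_le_mul_of_nonneg_right h1.le hT0]
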